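/- arXiv:2210.09937 — 2 statements merged into one kernel-verified Lean document; each statement's English description precedes it below -/
import Mathlib

section
/- For every W-logic WL and every WL-prime set Σ, there exists a class C of sets of WL-prime sets such that (Σ, C) is a WL-segment. -/
set_option autoImplicit false

/-- Formulas of the propositional modal language:
`A ::= p | ⊥ | A∧A | A∨A | A→A | □A | ◇A`. -/
inductive Formula : Type
  | var : ℕ → Formula
  | bot : Formula
  | and : Formula → Formula → Formula
  | or : Formula → Formula → Formula
  | imp : Formula → Formula → Formula
  | box : Formula → Formula
  | dia : Formula → Formula
  deriving DecidableEq

/-- `¬A := A → ⊥`. -/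
def Formula.neg (A : Formula) : Formula := A.imp Formula.bot

/-- `⊤ := ⊥ → ⊥`. -/
def Formula.top : Formula := Formula.bot.imp Formula.bot

/-- A specification of which additional modal axioms a logic has:
`N` (□⊤ / N-condition), `C` (C_□ together with K_◇ in W-logics),
`P` (P_□ classically / P_◇ in W-logics), `D` (□A→◇A), `T` (T_□, and T_◇ in W-logics). -/
structure LogicSpec where
  hasN : Bool := false
  hasC : Bool := false
  hasP : Bool := false
  hasD : Bool := false
  hasT : Bool := false

/-- The names of the fourteen systems. -/
inductive LName : Type
  | M | MN | MC | K | MP | MNP | MD | MND | MCD | KD | MT | MNT | MCT | KT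

/-- The axiom flags of the fourteen classical modal logics. -/
def cSpec : LName → LogicSpec
  | .M   => {}
  | .MN  => { hasN := true }
  | .MC  => { hasC := true }
  | .K   => { hasN := true, hasC := true }
  | .MP  => { hasP := true }
  | .MNP => { hasN := true, hasP := true }
  | .MD  => { hasD := true }
  | .MND => { hasN := true, hasD := true }
  | .MCD => { hasC := true, hasD := true }
  | .KD  => { hasN := true, hasC := true, hasD := true }
  | .MT  => { hasT := true }
  | .MNT => { hasN := true, hasT := true }
  | .MCT => { hasC := true, hasT := true }
  | .KT  => { hasN := true, hasC := true, hasT := true }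

/-- The axiom flags of the fourteen W-logics (WMD and WMCD include the axiom P_◇ explicitly). -/
def wSpec : LName → LogicSpec
  | .MD  => { hasP := true, hasD := true }
  | .MCD => { hasC := true, hasP := true, hasD := true }
  | n    => cSpec n

/-- Hilbert-style provability in the W-logic determined by the flags `S`:
intuitionistic propositional logic plus dual∧, the monotonicity rules M_□ and M_◇,
and, according to the flags, N_□, C_□ together with K_◇, P_◇, D, T_□ together with T_◇. -/
inductive WProof (S : LogicSpec) : Formula → Prop
  | ax1 (A B : Formula) : WProof S (A.imp (B.imp A))
  | ax2 (A B C : Formula) : WProof S ((A.imp (B.imp C)).imp ((A.imp B).imp (A.imp C)))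
  | andI (A B : Formula) : WProof S (A.imp (B.imp (A.and B)))
  | andE1 (A B : Formula) : WProof S ((A.and B).imp A)
  | andE2 (A B : Formula) : WProof S ((A.and B).imp B)
  | orI1 (A B : Formula) : WProof S (A.imp (A.or B))
  | orI2 (A B : Formula) : WProof S (B.imp (A.or B))
  | orE (A B C : Formula) : WProof S ((A.imp C).imp ((B.imp C).imp ((A.or B).imp C)))
  | botE (A : Formula) : WProof S (Formula.bot.imp A)
  | mp {A B : Formula} : WProof S (A.imp B) → WProof S A → WProof S B
  | dualAnd (A : Formula) : WProof S (((Formula.box A).and (Formula.dia A.neg)).neg)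
  | monBox {A B : Formula} : WProof S (A.imp B) → WProof S ((Formula.box A).imp (Formula.box B))
  | monDia {A B : Formula} : WProof S (A.imp B) → WProof S ((Formula.dia A).imp (Formula.dia B))
  | nBox : S.hasN = true → WProof S (Formula.box Formula.top)
  | cBox (A B : Formula) : S.hasC = true →
      WProof S (((Formula.box A).and (Formula.box B)).imp (Formula.box (A.and B)))
  | kDia (A B : Formula) : S.hasC = true →
      WProof S ((Formula.box (A.imp B)).imp ((Formula.dia A).imp (Formula.dia B)))
  | pDia : S.hasP = true → WProof S (Formula.dia Formula.top)
  | dAx (A : Formula) : S.hasD = true → WProof S ((Formula.box A).imp (Formula.dia A))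
  | tBox (A : Formula) : S.hasT = true → WProof S ((Formula.box A).imp A)
  | tDia (A : Formula) : S.hasT = true → WProof S (A.imp (Formula.dia A))

/-- Conjunction of a list of formulas (empty conjunction is ⊤). -/
def conjList : List Formula → Formula
  | [] => Formula.top
  | [A] => A
  | A :: B :: l => A.and (conjList (B :: l))

/-- Disjunction of a list of formulas (empty disjunction is ⊥). -/
def disjList : List Formula → Formula
  | [] => Formula.bot
  | [A] => A
  | A :: B :: l => A.or (disjList (B :: l))

/-- `⋀Γ` for a finite multiset `Γ` (empty `Γ` is read as ⊤). -/
noncomputable def conjM (Γ : Multiset Formula) : Formula := conjList Γ.toList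

/-- `⋁Δ` for a finite multiset `Δ` (empty `Δ` is read as ⊥). -/
noncomputable def disjM (Δ : Multiset Formula) : Formula := disjList Δ.toList

/-- `A` is deducible in the W-logic `S` from the set of formulas `Sg`:
there is a finite subset `{B₁,…,Bₙ} ⊆ Sg` with `⊢ B₁∧…∧Bₙ → A`. -/
def Deduces (S : LogicSpec) (Sg : Set Formula) (A : Formula) : Prop :=
  ∃ L : List Formula, (∀ B ∈ L, B ∈ Sg) ∧ WProof S ((conjList L).imp A)

/-- A WL-prime set: consistent, closed under deduction, and with the disjunction property. -/
structure IsPrime (S : LogicSpec) (Sg : Set Formula) : Prop where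
  consistent : ¬ Deduces S Sg Formula.bot
  closed : ∀ A : Formula, Deduces S Sg A → A ∈ Sg
  disj : ∀ A B : Formula, (A.or B) ∈ Sg → A ∈ Sg ∨ B ∈ Sg

/-- A WL-segment `(Sg, C)`: `Sg` is WL-prime and `C` is a class of sets of WL-prime
sets satisfying the box and diamond conditions, together with the extra conditions
for logics containing C_□ & K_◇, D, or T_□ & T_◇. -/
structure IsSegment (S : LogicSpec) (Sg : Set Formula) (C : Set (Set (Set Formula))) : Prop where
  prime : IsPrime S Sg
  allPrime : ∀ U ∈ C, ∀ Pr ∈ U, IsPrime S Pr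
  boxCond : ∀ A : Formula, Formula.box A ∈ Sg → ∃ U ∈ C, ∀ Pr ∈ U, A ∈ Pr
  diaCond : ∀ A : Formula, Formula.dia A ∈ Sg → ∀ U ∈ C, ∃ Pr ∈ U, A ∈ Pr
  cCond : S.hasC = true → ∀ U ∈ C, ∀ U' ∈ C, U ∩ U' ∈ C
  dCond : S.hasD = true → ∀ U ∈ C, ∀ U' ∈ C, (U ∩ U').Nonempty
  tCond : S.hasT = true → ∀ U ∈ C, Sg ∈ U

/-! ### Auxiliary development -/

section Toolkit

variable {S : LogicSpec}

theorem wid (A : Formula) : WProof S (A.imp A) :=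
  WProof.mp (WProof.mp (WProof.ax2 A (A.imp A) A) (WProof.ax1 A (A.imp A))) (WProof.ax1 A A)

theorem wtop : WProof S Formula.top := wid Formula.bot

theorem wconst {A : Formula} (B : Formula) (h : WProof S A) : WProof S (B.imp A) :=
  WProof.mp (WProof.ax1 A B) h

theorem sComb {A B C : Formula} (h : WProof S (A.imp (B.imp C))) (g : WProof S (A.imp B)) :
    WProof S (A.imp C) :=
  WProof.mp (WProof.mp (WProof.ax2 A B C) h) g

theorem imp_trans {A B C : Formula} (h₁ : WProof S (A.imp B)) (h₂ : WProof S (B.imp C)) :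
    WProof S (A.imp C) :=
  sComb (wconst A h₂) h₁

theorem d2 {X Y Z W : Formula} (h : WProof S (X.imp (Y.imp (Z.imp W))))
    (g : WProof S (X.imp (Y.imp Z))) : WProof S (X.imp (Y.imp W)) :=
  sComb (sComb (wconst X (WProof.ax2 Y Z W)) h) g

theorem flip_imp {A B C : Formula} (h : WProof S (A.imp (B.imp C))) :
    WProof S (B.imp (A.imp C)) :=
  d2 (wconst B h) (WProof.ax1 B A)

theorem conj_head (A : Formula) (L : List Formula) :
    WProof S ((conjList (A :: L)).imp A) := by
  cases L with
  | nil => exact wid A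
  | cons B l => exact WProof.andE1 A (conjList (B :: l))

theorem conj_tail (A : Formula) (L : List Formula) :
    WProof S ((conjList (A :: L)).imp (conjList L)) := by
  cases L with
  | nil => exact wconst A wtop
  | cons B l => exact WProof.andE2 A (conjList (B :: l))

theorem conj_pair (A : Formula) (L : List Formula) :
    WProof S (A.imp ((conjList L).imp (conjList (A :: L)))) := by
  cases L with
  | nil => exact WProof.ax1 A Formula.top
  | cons B l => exact WProof.andI A (conjList (B :: l))

theorem conj_mem {A : Formula} : ∀ {L : List Formula}, A ∈ L →
    WProof S ((conjList L).imp A) := by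
  intro L
  induction L with
  | nil => intro h; exact absurd h List.not_mem_nil
  | cons B l ih =>
    intro h
    rcases List.mem_cons.mp h with rfl | h
    · exact conj_head A l
    · exact imp_trans (conj_tail B l) (ih h)

theorem imp_conjList {C : Formula} : ∀ {L : List Formula}, (∀ x ∈ L, WProof S (C.imp x)) →
    WProof S (C.imp (conjList L)) := by
  intro L
  induction L with
  | nil => intro _; exact wconst C wtop
  | cons A l ih =>
    intro h
    exact sComb (sComb (wconst C (conj_pair A l)) (h A List.mem_cons_self))
      (ih fun x hx => h x (List.mem_cons_of_mem A hx))

theorem imp2_conjList {P Q : Formula} : ∀ {L : List Formula},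
    (∀ x ∈ L, WProof S (P.imp (Q.imp x))) → WProof S (P.imp (Q.imp (conjList L))) := by
  intro L
  induction L with
  | nil => intro _; exact wconst P (wconst Q wtop)
  | cons A l ih =>
    intro h
    exact d2 (d2 (wconst P (wconst Q (conj_pair A l))) (h A List.mem_cons_self))
      (ih fun x hx => h x (List.mem_cons_of_mem A hx))

theorem conj_subset {L M : List Formula} (h : ∀ x ∈ L, x ∈ M) :
    WProof S ((conjList M).imp (conjList L)) :=
  imp_conjList fun x hx => conj_mem (h x hx)

theorem Deduces.ofProof {Γ : Set Formula} {A : Formula} (h : WProof S A) : Deduces S Γ A :=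
  ⟨[], fun B hB => absurd hB List.not_mem_nil, wconst Formula.top h⟩

theorem Deduces.mem {Γ : Set Formula} {A : Formula} (h : A ∈ Γ) : Deduces S Γ A :=
  ⟨[A], fun B hB => by rcases List.mem_singleton.mp hB with rfl; exact h, wid A⟩

theorem Deduces.mono {Γ Γ' : Set Formula} {A : Formula} (h : Γ ⊆ Γ') (hd : Deduces S Γ A) :
    Deduces S Γ' A := by
  obtain ⟨L, hL, hp⟩ := hd
  exact ⟨L, fun B hB => h (hL B hB), hp⟩

theorem Deduces.mp {Γ : Set Formula} {A B : Formula} (h₁ : Deduces S Γ (A.imp B))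
    (h₂ : Deduces S Γ A) : Deduces S Γ B := by
  obtain ⟨L₁, hL₁, hp₁⟩ := h₁
  obtain ⟨L₂, hL₂, hp₂⟩ := h₂
  refine ⟨L₁ ++ L₂, ?_, ?_⟩
  · intro x hx
    rcases List.mem_append.mp hx with hx | hx
    exacts [hL₁ x hx, hL₂ x hx]
  · exact sComb (imp_trans (conj_subset fun x hx => List.mem_append.mpr (Or.inl hx)) hp₁)
      (imp_trans (conj_subset fun x hx => List.mem_append.mpr (Or.inr hx)) hp₂)

theorem Deduces.deduction {Γ : Set Formula} {A B : Formula}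
    (h : Deduces S (insert A Γ) B) : Deduces S Γ (A.imp B) := by
  classical
  obtain ⟨L, hL, hp⟩ := h
  set L' := L.filter (fun x => x ≠ A) with hL'
  refine ⟨L', ?_, ?_⟩
  · intro x hx
    have hx' := List.mem_filter.mp hx
    have hne : x ≠ A := by simpa using hx'.2
    rcases hL x hx'.1 with h1 | h1
    · exact absurd h1 hne
    · exact h1
  · have step1 : WProof S (A.imp ((conjList L').imp (conjList L))) := by
      refine imp2_conjList fun x hx => ?_
      by_cases hxa : x = A
      · subst hxa; exact WProof.ax1 x (conjList L')
      · exact wconst A (conj_mem (List.mem_filter.mpr ⟨hx, by simpa using hxa⟩))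
    have step2 : WProof S (A.imp ((conjList L').imp B)) :=
      d2 (wconst A (wconst (conjList L') hp)) step1
    exact flip_imp step2

theorem Deduces.cut {Γ : Set Formula} {A B : Formula} (h₁ : Deduces S Γ A)
    (h₂ : Deduces S (insert A Γ) B) : Deduces S Γ B :=
  (Deduces.deduction h₂).mp h₁

end Toolkit

/-! ### Countability of formulas -/

private def encF : Formula → ℕ
  | .var n => Nat.pair 0 n
  | .bot => Nat.pair 1 0
  | .and a b => Nat.pair 2 (Nat.pair (encF a) (encF b))
  | .or a b => Nat.pair 3 (Nat.pair (encF a) (encF b))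
  | .imp a b => Nat.pair 4 (Nat.pair (encF a) (encF b))
  | .box a => Nat.pair 5 (encF a)
  | .dia a => Nat.pair 6 (encF a)

private theorem encF_injective : Function.Injective encF := by
  intro a
  induction a with
  | var n =>
    intro b h; cases b <;> simp [encF, Nat.pair_eq_pair] at h
    exact congrArg Formula.var h
  | bot =>
    intro b h; cases b <;> simp [encF, Nat.pair_eq_pair] at h ⊢
  | and a₁ a₂ ih₁ ih₂ =>
    intro b h; cases b <;> simp [encF, Nat.pair_eq_pair] at h
    rw [ih₁ h.1, ih₂ h.2]
  | or a₁ a₂ ih₁ ih₂ =>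
    intro b h; cases b <;> simp [encF, Nat.pair_eq_pair] at h
    rw [ih₁ h.1, ih₂ h.2]
  | imp a₁ a₂ ih₁ ih₂ =>
    intro b h; cases b <;> simp [encF, Nat.pair_eq_pair] at h
    rw [ih₁ h.1, ih₂ h.2]
  | box a ih =>
    intro b h; cases b <;> simp [encF, Nat.pair_eq_pair] at h
    rw [ih h]
  | dia a ih =>
    intro b h; cases b <;> simp [encF, Nat.pair_eq_pair] at h
    rw [ih h]

instance : Countable Formula := ⟨⟨encF, encF_injective⟩⟩
instance : Nonempty Formula := ⟨Formula.bot⟩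

/-! ### Lindenbaum construction -/

open scoped Classical in
noncomputable def chainF (S : LogicSpec) (Γ : Set Formula) (e : ℕ → Formula) : ℕ → Set Formula
  | 0 => Γ
  | n + 1 =>
      if Deduces S (insert (e n) (chainF S Γ e n)) Formula.bot then chainF S Γ e n
      else insert (e n) (chainF S Γ e n)

theorem chainF_le_succ (S : LogicSpec) (Γ : Set Formula) (e : ℕ → Formula) (n : ℕ) :
    chainF S Γ e n ⊆ chainF S Γ e (n + 1) := by
  rw [chainF]
  split
  · exact subset_rfl
  · exact Set.subset_insert _ _

theorem chainF_mono (S : LogicSpec) (Γ : Set Formula) (e : ℕ → Formula) {m n : ℕ}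
    (h : m ≤ n) : chainF S Γ e m ⊆ chainF S Γ e n := by
  induction h with
  | refl => exact subset_rfl
  | step h ih => exact ih.trans (chainF_le_succ S Γ e _)

theorem chainF_con (S : LogicSpec) (Γ : Set Formula) (e : ℕ → Formula)
    (hcon : ¬ Deduces S Γ Formula.bot) :
    ∀ n, ¬ Deduces S (chainF S Γ e n) Formula.bot := by
  intro n
  induction n with
  | zero => exact hcon
  | succ n ih =>
    rw [chainF]
    split
    · exact ih
    · assumption

theorem lindenbaum {S : LogicSpec} {Γ : Set Formula} (hcon : ¬ Deduces S Γ Formula.bot) :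
    ∃ P : Set Formula, IsPrime S P ∧ Γ ⊆ P := by
  obtain ⟨e, he⟩ := exists_surjective_nat Formula
  set P := ⋃ n, chainF S Γ e n with hPdef
  have hmem : ∀ {n : ℕ}, chainF S Γ e n ⊆ P := fun {n} => Set.subset_iUnion (chainF S Γ e) n
  have hfin : ∀ L : List Formula, (∀ x ∈ L, x ∈ P) →
      ∃ n, ∀ x ∈ L, x ∈ chainF S Γ e n := by
    intro L
    induction L with
    | nil => intro _; exact ⟨0, by simp⟩
    | cons A t ih =>
      intro hx
      obtain ⟨n, hn⟩ := ih fun x h => hx x (List.mem_cons_of_mem A h)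
      obtain ⟨m, hm⟩ := Set.mem_iUnion.mp (hx A List.mem_cons_self)
      refine ⟨max n m, fun x h => ?_⟩
      rcases List.mem_cons.mp h with rfl | h
      · exact chainF_mono S Γ e (le_max_right n m) hm
      · exact chainF_mono S Γ e (le_max_left n m) (hn x h)
  have hded : ∀ A : Formula, Deduces S P A → ∃ n, Deduces S (chainF S Γ e n) A := by
    rintro A ⟨L, hL, hp⟩
    obtain ⟨n, hn⟩ := hfin L hL
    exact ⟨n, L, hn, hp⟩
  have hconP : ¬ Deduces S P Formula.bot := by
    intro hd
    obtain ⟨n, hn⟩ := hded _ hd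
    exact chainF_con S Γ e hcon n hn
  have hcomp : ∀ A : Formula, A ∈ P ∨ Deduces S (insert A P) Formula.bot := by
    intro A
    obtain ⟨n, rfl⟩ := he A
    by_cases hd : Deduces S (insert (e n) (chainF S Γ e n)) Formula.bot
    · exact Or.inr (hd.mono (Set.insert_subset_insert hmem))
    · left
      apply hmem (n := n + 1)
      rw [chainF, if_neg hd]
      exact Set.mem_insert _ _
  have hclosed : ∀ A : Formula, Deduces S P A → A ∈ P := by
    intro A hA
    rcases hcomp A with h | h
    · exact h
    · exact absurd (Deduces.cut hA h) hconP
  refine ⟨P, ⟨hconP, hclosed, ?_⟩, fun x hx => hmem (n := 0) hx⟩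
  intro A B hAB
  by_contra hnot
  push_neg at hnot
  obtain ⟨hA, hB⟩ := hnot
  have dA : Deduces S P (A.imp Formula.bot) := by
    refine Deduces.deduction ?_
    rcases hcomp A with h | h
    · exact absurd h hA
    · exact h
  have dB : Deduces S P (B.imp Formula.bot) := by
    refine Deduces.deduction ?_
    rcases hcomp B with h | h
    · exact absurd h hB
    · exact h
  exact hconP ((((Deduces.ofProof (WProof.orE A B Formula.bot)).mp dA).mp dB).mp
    (Deduces.mem hAB))

/-! ### Modal lemmas -/

theorem boxConjC {S : LogicSpec} {Sg : Set Formula} (hSg : IsPrime S Sg)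
    (hC : S.hasC = true) :
    ∀ l : List Formula, l ≠ [] → (∀ A ∈ l, Formula.box A ∈ Sg) →
      Formula.box (conjList l) ∈ Sg
  | [], h, _ => absurd rfl h
  | [A], _, hbox => hbox A (List.mem_singleton.mpr rfl)
  | A :: B :: t, _, hbox => by
    have ht : Formula.box (conjList (B :: t)) ∈ Sg :=
      boxConjC hSg hC (B :: t) (by simp) fun x hx => hbox x (List.mem_cons_of_mem A hx)
    have hA : Formula.box A ∈ Sg := hbox A List.mem_cons_self
    have hc := WProof.cBox (S := S) A (conjList (B :: t)) hC
    exact hSg.closed _ ((Deduces.ofProof hc).mp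
      (((Deduces.ofProof (WProof.andI _ _)).mp (Deduces.mem hA)).mp (Deduces.mem ht)))

theorem boxConj {S : LogicSpec} {Sg : Set Formula} (hSg : IsPrime S Sg)
    (l : List Formula) (hne : l ≠ []) (hbox : ∀ A ∈ l, Formula.box A ∈ Sg)
    (hok : S.hasC = true ∨ l.length = 1) : Formula.box (conjList l) ∈ Sg := by
  rcases hok with hC | hlen
  · exact boxConjC hSg hC l hne hbox
  · obtain ⟨A, rfl⟩ := List.length_eq_one_iff.mp hlen
    exact hbox A (List.mem_singleton.mpr rfl)

theorem key_consistent {S : LogicSpec} {Sg : Set Formula} (hSg : IsPrime S Sg)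
    {F B : Formula} (hF : Formula.box F ∈ Sg) (hB : Formula.dia B ∈ Sg) :
    ¬ Deduces S {F, B} Formula.bot := by
  intro hded
  have h1 : Deduces S {B} (F.imp Formula.bot) := Deduces.deduction hded
  obtain ⟨Lw, hLw, hpw⟩ := h1
  have h2 : WProof S (B.imp (F.imp Formula.bot)) := by
    refine imp_trans (imp_conjList fun x hx => ?_) hpw
    have : x = B := hLw x hx
    subst this
    exact wid x
  have h2' : WProof S (B.imp F.neg) := h2
  have h3 : WProof S ((Formula.dia B).imp (Formula.dia F.neg)) := WProof.monDia h2'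
  have h4 : Formula.dia F.neg ∈ Sg := hSg.closed _ ((Deduces.ofProof h3).mp (Deduces.mem hB))
  have h5 : Deduces S Sg Formula.bot :=
    (Deduces.ofProof (WProof.dualAnd F)).mp
      (((Deduces.ofProof (WProof.andI _ _)).mp (Deduces.mem hF)).mp (Deduces.mem h4))
  exact hSg.consistent h5

theorem exists_prime_lemma {S : LogicSpec} {Sg : Set Formula} (hSg : IsPrime S Sg)
    (l : List Formula) (hne : l ≠ []) (hbox : ∀ A ∈ l, Formula.box A ∈ Sg)
    (hok : S.hasC = true ∨ l.length = 1) {B : Formula} (hB : Formula.dia B ∈ Sg) :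
    ∃ P : Set Formula, IsPrime S P ∧ (∀ A ∈ l, A ∈ P) ∧ B ∈ P := by
  have hF : Formula.box (conjList l) ∈ Sg := boxConj hSg l hne hbox hok
  have hcon : ¬ Deduces S {conjList l, B} Formula.bot := key_consistent hSg hF hB
  obtain ⟨P, hP, hsub⟩ := lindenbaum hcon
  refine ⟨P, hP, fun A hA => ?_, hsub (by simp)⟩
  exact hP.closed A ((Deduces.ofProof (conj_mem hA)).mp
    (Deduces.mem (hsub (by simp))))

theorem main_segment (S : LogicSpec) (Sg : Set Formula) (h : IsPrime S Sg) :
    ∃ C : Set (Set (Set Formula)), IsSegment S Sg C := by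
  classical
  refine ⟨{U | ∃ l : List Formula, l ≠ [] ∧ (∀ A ∈ l, Formula.box A ∈ Sg) ∧
      (S.hasC = true ∨ l.length = 1) ∧
      U = {P | IsPrime S P ∧ ∀ A ∈ l, A ∈ P}}, ?_⟩
  refine ⟨h, ?_, ?_, ?_, ?_, ?_, ?_⟩
  · -- allPrime
    rintro U ⟨l, _, _, _, rfl⟩ P hP
    exact hP.1
  · -- boxCond
    intro A hA
    refine ⟨{P | IsPrime S P ∧ ∀ B ∈ [A], B ∈ P}, ⟨[A], by simp, by simpa using hA,
      Or.inr rfl, rfl⟩, fun P hP => hP.2 A (List.mem_singleton.mpr rfl)⟩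
  · -- diaCond
    rintro A hA U ⟨l, hne, hbox, hok, rfl⟩
    obtain ⟨P, hP, hl, hAP⟩ := exists_prime_lemma h l hne hbox hok hA
    exact ⟨P, ⟨hP, hl⟩, hAP⟩
  · -- cCond
    rintro hC U ⟨l, hne, hbox, _, rfl⟩ U' ⟨l', hne', hbox', _, rfl⟩
    refine ⟨l ++ l', by simp [hne], ?_, Or.inl hC, ?_⟩
    · intro A hA
      rcases List.mem_append.mp hA with hA | hA
      exacts [hbox A hA, hbox' A hA]
    · ext P
      simp only [Set.mem_inter_iff, Set.mem_setOf_eq, List.mem_append]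
      constructor
      · rintro ⟨⟨hP, h1⟩, ⟨_, h2⟩⟩
        exact ⟨hP, fun A hA => hA.elim (h1 A) (h2 A)⟩
      · rintro ⟨hP, h12⟩
        exact ⟨⟨hP, fun A hA => h12 A (Or.inl hA)⟩, ⟨hP, fun A hA => h12 A (Or.inr hA)⟩⟩
  · -- dCond
    rintro hD U ⟨l, hne, hbox, hok, rfl⟩ U' ⟨l', hne', hbox', hok', rfl⟩
    have hbox'' : Formula.box (conjList l') ∈ Sg := boxConj h l' hne' hbox' hok'
    have hdia : Formula.dia (conjList l') ∈ Sg :=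
      h.closed _ ((Deduces.ofProof (WProof.dAx (conjList l') hD)).mp (Deduces.mem hbox''))
    obtain ⟨P, hP, hl, hconj⟩ := exists_prime_lemma h l hne hbox hok hdia
    refine ⟨P, ⟨hP, hl⟩, hP, fun A hA => ?_⟩
    exact hP.closed A ((Deduces.ofProof (conj_mem hA)).mp (Deduces.mem hconj))
  · -- tCond
    rintro hT U ⟨l, hne, hbox, hok, rfl⟩
    refine ⟨h, fun A hA => ?_⟩
    exact h.closed A ((Deduces.ofProof (WProof.tBox A hT)).mp (Deduces.mem (hbox A hA)))


/-- for every W-logic WL and every WL-prime set `Σ` there is a class `C`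
of sets of WL-prime sets such that `(Σ, C)` is a WL-segment. -/
theorem statement16 (L : LName) (Sg : Set Formula) (h : IsPrime (wSpec L) Sg) :
    ∃ C : Set (Set (Set Formula)), IsSegment (wSpec L) Sg C := by
  exact main_segment (wSpec L) Sg h
end

section
/- Truth lemma: for every W-logic WL, every WL-segment (Σ, C) in the canonical model M^c for WL, and every formula A: M^c, (Σ,C) ⊩ A if and only if A ∈ Σ. -/
set_option autoImplicit false

/-- A constructive neighbourhood model (CNM): a preorder `le` of intuitionistic
accessibility, a neighbourhood function `N`, and a hereditary valuation `V`. -/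
structure CNM (W : Type) where
  le : W → W → Prop
  le_refl : ∀ w, le w w
  le_trans : ∀ u v w, le u v → le v w → le u w
  N : W → Set (Set W)
  V : ℕ → Set W
  hered : ∀ (p : ℕ) (u v : W), le u v → u ∈ V p → v ∈ V p

/-- Forcing in a constructive neighbourhood model:
`w ⊩ B→C` iff for all `v ≥ w`, `v ⊩ B` implies `v ⊩ C`;
`w ⊩ □B` iff for all `v ≥ w` there is `α ∈ N(v)` with `u ⊩ B` for all `u ∈ α`;
`w ⊩ ◇B` iff for all `v ≥ w` and all `α ∈ N(v)` there is `u ∈ α` with `u ⊩ B`. -/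
def CNM.force {W : Type} (M : CNM W) : Formula → W → Prop
  | Formula.var p, w => w ∈ M.V p
  | Formula.bot, _ => False
  | Formula.and A B, w => M.force A w ∧ M.force B w
  | Formula.or A B, w => M.force A w ∨ M.force B w
  | Formula.imp A B, w => ∀ v, M.le w v → M.force A v → M.force B v
  | Formula.box A, w => ∀ v, M.le w v → ∃ α ∈ M.N v, ∀ u ∈ α, M.force A u
  | Formula.dia A, w => ∀ v, M.le w v → ∀ α ∈ M.N v, ∃ u ∈ α, M.force A u

/-- `M` is a constructive neighbourhood model for the W-logic with flags `S`: it
satisfies the condition (C), (N), (T), (D), (P) corresponding to each modal axiom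
of the logic among C_□ (with K_◇), N_□, T_□ (with T_◇), D, P_◇. -/
def CNM.forLogic {W : Type} (S : LogicSpec) (M : CNM W) : Prop :=
  (S.hasC = true → ∀ w, ∀ α ∈ M.N w, ∀ β ∈ M.N w, α ∩ β ∈ M.N w) ∧
  (S.hasN = true → ∀ w, M.N w ≠ ∅) ∧
  (S.hasT = true → ∀ w, ∀ α ∈ M.N w, w ∈ α) ∧
  (S.hasD = true → ∀ w, ∀ α ∈ M.N w, ∀ β ∈ M.N w, (α ∩ β).Nonempty) ∧
  (S.hasP = true → ∀ w, ∅ ∉ M.N w)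

/-- The worlds of the canonical model for the W-logic `S`: the WL-segments. -/
def Seg (S : LogicSpec) : Type :=
  { x : Set Formula × Set (Set (Set Formula)) // IsSegment S x.1 x.2 }

/-- The canonical model for the W-logic `S`: worlds are WL-segments,
`(Σ,C) ≤ (Σ',C')` iff `Σ ⊆ Σ'`, the neighbourhoods of `(Σ,C)` are the sets
`α_U = {(Σ',C') : Σ' ∈ U}` for `U ∈ C`, and `(Σ,C) ∈ V(p)` iff `p ∈ Σ`. -/
def canonical (S : LogicSpec) : CNM (Seg S) where
  le x y := x.1.1 ⊆ y.1.1
  le_refl _ := subset_rfl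
  le_trans _ _ _ h1 h2 := fun _ ha => h2 (h1 ha)
  N x := { α | ∃ U ∈ x.1.2, α = { y : Seg S | y.1.1 ∈ U } }
  V p := { x : Seg S | Formula.var p ∈ x.1.1 }
  hered _ _ _ hle h := hle h


/-! ### Hilbert-style toolkit -/

namespace WProof
variable {S : LogicSpec} {A B C X : Formula}

theorem pid (A : Formula) : WProof S (A.imp A) :=
  mp (mp (ax2 A (A.imp A) A) (ax1 A (A.imp A))) (ax1 A A)

theorem ptop : WProof S Formula.top := pid Formula.bot

theorem imp_trans (h1 : WProof S (A.imp B)) (h2 : WProof S (B.imp C)) : WProof S (A.imp C) :=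
  mp (mp (ax2 A B C) (mp (ax1 (B.imp C) A) h2)) h1

theorem toTop : WProof S (A.imp Formula.top) := mp (ax1 Formula.top A) ptop

theorem appUnder (f : WProof S (X.imp (A.imp B))) (g : WProof S (X.imp A)) :
    WProof S (X.imp B) :=
  mp (mp (ax2 X A B) f) g

theorem compUnder (f : WProof S (X.imp (A.imp B))) (g : WProof S (B.imp C)) :
    WProof S (X.imp (A.imp C)) :=
  imp_trans f (mp (ax2 A B C) (mp (ax1 (B.imp C) A) g))

theorem imp_swap (h : WProof S (A.imp (B.imp C))) : WProof S (B.imp (A.imp C)) :=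
  imp_trans (ax1 B A) (mp (ax2 A B C) h)

theorem andI' (h1 : WProof S (X.imp A)) (h2 : WProof S (X.imp B)) :
    WProof S (X.imp (A.and B)) :=
  appUnder (imp_trans h1 (andI A B)) h2

theorem conj_head : ∀ (A : Formula) (L : List Formula), WProof S ((conjList (A :: L)).imp A)
  | A, [] => pid A
  | A, B :: l => andE1 A (conjList (B :: l))

theorem conj_tail :
    ∀ (A : Formula) (L : List Formula), WProof S ((conjList (A :: L)).imp (conjList L))
  | _, [] => toTop
  | A, B :: l => andE2 A (conjList (B :: l))

theorem conj_pair {L : List Formula} (h1 : WProof S (X.imp A))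
    (h2 : WProof S (X.imp (conjList L))) : WProof S (X.imp (conjList (A :: L))) := by
  cases L with
  | nil => exact h1
  | cons B l => exact andI' h1 h2

theorem ded {L : List Formula} (h : WProof S ((conjList (B :: L)).imp A)) :
    WProof S ((conjList L).imp (B.imp A)) := by
  cases L with
  | nil => exact mp (ax1 (B.imp A) Formula.top) h
  | cons C l => exact imp_swap (compUnder (andI B (conjList (C :: l))) h)

theorem undeD {L : List Formula} (h : WProof S ((conjList L).imp (B.imp A))) :
    WProof S ((conjList (B :: L)).imp A) :=
  appUnder (imp_trans (conj_tail B L) h) (conj_head B L)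

theorem flipThm (B C A : Formula) :
    WProof S ((B.imp (C.imp A)).imp (C.imp (B.imp A))) := by
  have b := conj_head (S := S) B [C, B.imp (C.imp A)]
  have rest := conj_tail (S := S) B [C, B.imp (C.imp A)]
  have c := imp_trans rest (conj_head C [B.imp (C.imp A)])
  have t := imp_trans rest (imp_trans (conj_tail C [B.imp (C.imp A)])
    (conj_head (B.imp (C.imp A)) []))
  have a : WProof S ((conjList [B, C, B.imp (C.imp A)]).imp A) := appUnder (appUnder t b) c
  exact ded (ded a)

theorem swapInner (h : WProof S (X.imp (B.imp (C.imp A)))) :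
    WProof S (X.imp (C.imp (B.imp A))) := imp_trans h (flipThm B C A)

theorem contrUnder (h : WProof S (X.imp (B.imp (B.imp A)))) : WProof S (X.imp (B.imp A)) :=
  imp_trans h (mp (imp_swap (ax2 B B A)) (pid B))

theorem conj_append_left : ∀ (L1 L2 : List Formula),
    WProof S ((conjList (L1 ++ L2)).imp (conjList L1))
  | [], _ => toTop
  | A :: l1, L2 =>
    conj_pair (conj_head A (l1 ++ L2))
      (imp_trans (conj_tail A (l1 ++ L2)) (conj_append_left l1 L2))

theorem conj_append_right : ∀ (L1 L2 : List Formula),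
    WProof S ((conjList (L1 ++ L2)).imp (conjList L2))
  | [], _ => pid _
  | A :: l1, L2 => imp_trans (conj_tail A (l1 ++ L2)) (conj_append_right l1 L2)

end WProof

/-! ### Deduction facts -/

theorem deduces_of_mem {S : LogicSpec} {Sg : Set Formula} {A : Formula} (h : A ∈ Sg) :
    Deduces S Sg A :=
  ⟨[A], by simpa using h, WProof.pid A⟩

theorem deduces_of_proof {S : LogicSpec} {Sg : Set Formula} {A : Formula} (h : WProof S A) :
    Deduces S Sg A :=
  ⟨[], by simp, WProof.mp (WProof.ax1 A Formula.top) h⟩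

theorem deduces_mono {S : LogicSpec} {Sg Sg' : Set Formula} {A : Formula} (hsub : Sg ⊆ Sg')
    (h : Deduces S Sg A) : Deduces S Sg' A := by
  obtain ⟨L, hL, p⟩ := h
  exact ⟨L, fun B hB => hsub (hL B hB), p⟩

theorem deduces_imp {S : LogicSpec} {Sg : Set Formula} {A B : Formula}
    (h : WProof S (A.imp B)) (hA : Deduces S Sg A) : Deduces S Sg B := by
  obtain ⟨L, hL, p⟩ := hA
  exact ⟨L, hL, WProof.imp_trans p h⟩

theorem deduces_mp {S : LogicSpec} {Sg : Set Formula} {A B : Formula}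
    (h1 : Deduces S Sg (A.imp B)) (h2 : Deduces S Sg A) : Deduces S Sg B := by
  obtain ⟨L1, hL1, p1⟩ := h1
  obtain ⟨L2, hL2, p2⟩ := h2
  refine ⟨L1 ++ L2, ?_, ?_⟩
  · intro B hB
    rcases List.mem_append.1 hB with h | h
    exacts [hL1 B h, hL2 B h]
  · exact WProof.appUnder (WProof.imp_trans (WProof.conj_append_left L1 L2) p1)
      (WProof.imp_trans (WProof.conj_append_right L1 L2) p2)

theorem deduces_union_aux {S : LogicSpec} {Sg : Set Formula} {B : Formula} :
    ∀ (L : List Formula) (A : Formula), (∀ C ∈ L, C ∈ Sg ∪ {B}) →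
      WProof S ((conjList L).imp A) → Deduces S Sg (B.imp A) := by
  intro L
  induction L with
  | nil =>
    intro A _ h
    exact ⟨[], by simp, WProof.imp_trans h (WProof.ax1 A B)⟩
  | cons C L ih =>
    intro A hmem h
    obtain ⟨L', hL', p⟩ := ih (C.imp A)
      (fun D hD => hmem D (List.mem_cons_of_mem _ hD)) (WProof.ded h)
    rcases hmem C (List.mem_cons_self) with hC | hC
    · refine ⟨C :: L', ?_, WProof.undeD (WProof.swapInner p)⟩
      intro D hD
      rcases List.mem_cons.1 hD with rfl | hD
      exacts [hC, hL' D hD]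
    · rw [Set.mem_singleton_iff] at hC
      subst hC
      exact ⟨L', hL', WProof.contrUnder p⟩

theorem deduces_insert {S : LogicSpec} {Sg : Set Formula} {B A : Formula} :
    Deduces S (Sg ∪ {B}) A ↔ Deduces S Sg (B.imp A) := by
  constructor
  · rintro ⟨L, hL, p⟩
    exact deduces_union_aux L A hL p
  · rintro ⟨L, hL, p⟩
    refine ⟨B :: L, ?_, WProof.undeD p⟩
    intro D hD
    rcases List.mem_cons.1 hD with rfl | hD
    · exact Set.mem_union_right _ rfl
    · exact Set.mem_union_left _ (hL D hD)

theorem deduces_singleton {S : LogicSpec} {B A : Formula} (h : Deduces S {B} A) :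
    WProof S (B.imp A) := by
  have h2 : Deduces S ((∅ : Set Formula) ∪ {B}) A := by rwa [Set.empty_union]
  obtain ⟨L, hL, p⟩ := deduces_insert.1 h2
  have hL0 : L = [] := by
    cases L with
    | nil => rfl
    | cons D l => exact absurd (hL D (List.mem_cons_self)) (Set.notMem_empty D)
  subst hL0
  exact WProof.mp p WProof.ptop

theorem deduces_pair {S : LogicSpec} {B' B A : Formula} (h : Deduces S {B', B} A) :
    WProof S (B'.imp (B.imp A)) := by
  have h2 : Deduces S (({B'} : Set Formula) ∪ {B}) A := by
    refine deduces_mono ?_ h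
    intro x hx
    rcases hx with rfl | hx
    · exact Set.mem_union_left _ rfl
    · exact Set.mem_union_right _ hx
  exact deduces_singleton (deduces_insert.1 h2)

/-! ### Prime set facts -/

namespace IsPrime
variable {S : LogicSpec} {Sg : Set Formula}

theorem mem_of_proof (h : IsPrime S Sg) {A : Formula} (p : WProof S A) : A ∈ Sg :=
  h.closed A (deduces_of_proof p)

theorem mp_mem (h : IsPrime S Sg) {A B : Formula} (hi : A.imp B ∈ Sg) (ha : A ∈ Sg) :
    B ∈ Sg :=
  h.closed B (deduces_mp (deduces_of_mem hi) (deduces_of_mem ha))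

theorem imp_mem (h : IsPrime S Sg) {A B : Formula} (p : WProof S (A.imp B)) (ha : A ∈ Sg) :
    B ∈ Sg :=
  h.closed B (deduces_imp p (deduces_of_mem ha))

theorem bot_not_mem (h : IsPrime S Sg) : Formula.bot ∉ Sg :=
  fun hb => h.consistent (deduces_of_mem hb)

theorem and_mem (h : IsPrime S Sg) {A B : Formula} : A.and B ∈ Sg ↔ A ∈ Sg ∧ B ∈ Sg := by
  constructor
  · intro hab
    exact ⟨h.imp_mem (WProof.andE1 A B) hab, h.imp_mem (WProof.andE2 A B) hab⟩
  · rintro ⟨ha, hb⟩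
    exact h.closed _ (deduces_mp (deduces_imp (WProof.andI A B) (deduces_of_mem ha))
      (deduces_of_mem hb))

theorem or_mem (h : IsPrime S Sg) {A B : Formula} : A.or B ∈ Sg ↔ A ∈ Sg ∨ B ∈ Sg := by
  constructor
  · exact h.disj A B
  · rintro (ha | hb)
    · exact h.imp_mem (WProof.orI1 A B) ha
    · exact h.imp_mem (WProof.orI2 A B) hb

theorem not_both (h : IsPrime S Sg) {A : Formula} (h1 : Formula.box A ∈ Sg)
    (h2 : Formula.dia A.neg ∈ Sg) : False :=
  h.bot_not_mem (h.mp_mem (h.mem_of_proof (WProof.dualAnd A)) (h.and_mem.2 ⟨h1, h2⟩))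

end IsPrime

/-! ### Lindenbaum lemma -/

theorem chain_list {c : Set (Set Formula)} (hchain : IsChain (· ⊆ ·) c) (hne : c.Nonempty) :
    ∀ L : List Formula, (∀ B ∈ L, B ∈ ⋃₀ c) → ∃ Γ ∈ c, ∀ B ∈ L, B ∈ Γ := by
  intro L
  induction L with
  | nil => exact fun _ => ⟨hne.choose, hne.choose_spec, by simp⟩
  | cons B L ih =>
    intro hL
    obtain ⟨Γ, hΓ, hall⟩ := ih (fun D hD => hL D (List.mem_cons_of_mem _ hD))
    obtain ⟨Γ', hΓ', hB⟩ := hL B (List.mem_cons_self)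
    rcases eq_or_ne Γ Γ' with rfl | hne'
    · refine ⟨Γ, hΓ, fun D hD => ?_⟩
      rcases List.mem_cons.1 hD with rfl | hd
      exacts [hB, hall D hd]
    rcases hchain hΓ hΓ' hne' with hsub | hsub
    · refine ⟨Γ', hΓ', fun D hD => ?_⟩
      rcases List.mem_cons.1 hD with rfl | hd
      exacts [hB, hsub (hall D hd)]
    · refine ⟨Γ, hΓ, fun D hD => ?_⟩
      rcases List.mem_cons.1 hD with rfl | hd
      exacts [hsub hB, hall D hd]

theorem lindenbaum_s18 {S : LogicSpec} {Sg : Set Formula} {A : Formula} (h : ¬ Deduces S Sg A) :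
    ∃ Pr, Sg ⊆ Pr ∧ IsPrime S Pr ∧ A ∉ Pr := by
  obtain ⟨m, hsub, hmax⟩ := zorn_subset_nonempty {Γ : Set Formula | ¬ Deduces S Γ A}
    (fun c hc hchain hne => by
      refine ⟨⋃₀ c, ?_, fun s hs => Set.subset_sUnion_of_mem hs⟩
      rintro ⟨L, hL, p⟩
      obtain ⟨Γ, hΓ, hall⟩ := chain_list hchain hne L hL
      exact hc hΓ ⟨L, hall, p⟩) Sg h
  have hm : ¬ Deduces S m A := hmax.prop
  have key : ∀ B : Formula, B ∉ m → Deduces S (m ∪ {B}) A := by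
    intro B hB
    by_contra hd
    exact hB (hmax.2 hd Set.subset_union_left (Set.mem_union_right _ rfl))
  refine ⟨m, hsub, ⟨?_, ?_, ?_⟩, ?_⟩
  · intro hbot
    exact hm (deduces_imp (WProof.botE A) hbot)
  · intro B hB
    by_contra hBm
    exact hm (deduces_mp (deduces_insert.1 (key B hBm)) hB)
  · intro B C hBC
    by_contra hcon
    push_neg at hcon
    obtain ⟨hB, hC⟩ := hcon
    have d1 := deduces_insert.1 (key B hB)
    have d2 := deduces_insert.1 (key C hC)
    exact hm (deduces_mp (deduces_mp (deduces_mp (deduces_of_proof (WProof.orE B C A)) d1) d2)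
      (deduces_of_mem hBC))
  · intro hA
    exact hm (deduces_of_mem hA)

/-! ### Canonical segments -/

/-- The set of primes containing `B`. -/
def UB (S : LogicSpec) (B : Formula) : Set (Set Formula) := {Pr | IsPrime S Pr ∧ B ∈ Pr}

/-- The canonical neighbourhood class of a prime set. -/
def canonC (S : LogicSpec) (Sg : Set Formula) : Set (Set (Set Formula)) :=
  {U | ∃ B, Formula.box B ∈ Sg ∧ U = UB S B}

/-- The extra neighbourhood used to refute `◇A`. -/
def Ustar (S : LogicSpec) (Sg : Set Formula) (A : Formula) : Set (Set Formula) :=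
  {Pr | IsPrime S Pr ∧ A ∉ Pr ∧ (S.hasC = true → ∀ C, Formula.box C ∈ Sg → C ∈ Pr)}

theorem dia_box_prime {S : LogicSpec} {Sg : Set Formula} {B' B : Formula} (hP : IsPrime S Sg)
    (hb : Formula.box B' ∈ Sg) (hd : Formula.dia B ∈ Sg) :
    ∃ Pr, IsPrime S Pr ∧ B' ∈ Pr ∧ B ∈ Pr := by
  have hcon : ¬ Deduces S {B', B} Formula.bot := by
    intro hded
    have p2 := WProof.imp_swap (deduces_pair hded)
    exact hP.not_both hb (hP.imp_mem (WProof.monDia p2) hd)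
  obtain ⟨Pr, hsub, hPr, _⟩ := lindenbaum_s18 hcon
  exact ⟨Pr, hPr, hsub (Set.mem_insert _ _), hsub (Set.mem_insert_of_mem _ rfl)⟩

theorem box_conj {S : LogicSpec} {Sg : Set Formula} (hP : IsPrime S Sg) (hC : S.hasC = true) :
    ∀ L : List Formula, L ≠ [] → (∀ C ∈ L, Formula.box C ∈ Sg) →
      Formula.box (conjList L) ∈ Sg := by
  intro L
  induction L with
  | nil => simp
  | cons C l ih =>
    intro _ hmem
    cases l with
    | nil => exact hmem C (List.mem_cons_self)
    | cons D l' =>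
      have h1 := hmem C (List.mem_cons_self)
      have h2 := ih (by simp) (fun D' hD' => hmem D' (List.mem_cons_of_mem _ hD'))
      exact hP.imp_mem (WProof.cBox C (conjList (D :: l')) hC) (hP.and_mem.2 ⟨h1, h2⟩)

theorem dia_avoid_prime {S : LogicSpec} {Sg : Set Formula} {A B : Formula} (hP : IsPrime S Sg)
    (hd : Formula.dia B ∈ Sg) (hA : Formula.dia A ∉ Sg) :
    ∃ Pr, Pr ∈ Ustar S Sg A ∧ B ∈ Pr := by
  by_cases hC : S.hasC = true
  · have hcon : ¬ Deduces S ({C | Formula.box C ∈ Sg} ∪ {B}) A := by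
      intro hded
      obtain ⟨L, hL, p⟩ := deduces_insert.1 hded
      cases L with
      | nil =>
        have := WProof.monDia (WProof.mp p WProof.ptop)
        exact hA (hP.imp_mem this hd)
      | cons C l =>
        have hbox : Formula.box (conjList (C :: l)) ∈ Sg :=
          box_conj hP hC (C :: l) (by simp) hL
        have hbba : Formula.box (B.imp A) ∈ Sg := hP.imp_mem (WProof.monBox p) hbox
        exact hA (hP.mp_mem (hP.imp_mem (WProof.kDia B A hC) hbba) hd)
    obtain ⟨Pr, hsub, hPr, hAPr⟩ := lindenbaum_s18 hcon
    exact ⟨Pr, ⟨hPr, hAPr, fun _ C hc => hsub (Set.mem_union_left _ hc)⟩,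
      hsub (Set.mem_union_right _ rfl)⟩
  · have hcon : ¬ Deduces S ({B} : Set Formula) A := by
      intro hded
      exact hA (hP.imp_mem (WProof.monDia (deduces_singleton hded)) hd)
    obtain ⟨Pr, hsub, hPr, hAPr⟩ := lindenbaum_s18 hcon
    exact ⟨Pr, ⟨hPr, hAPr, fun hc => absurd hc hC⟩, hsub rfl⟩

theorem UB_inter {S : LogicSpec} (B B' : Formula) : UB S B ∩ UB S B' = UB S (B.and B') := by
  ext Pr
  constructor
  · rintro ⟨⟨hPr, hB⟩, ⟨_, hB'⟩⟩
    exact ⟨hPr, hPr.and_mem.2 ⟨hB, hB'⟩⟩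
  · rintro ⟨hPr, hBB'⟩
    obtain ⟨hB, hB'⟩ := hPr.and_mem.1 hBB'
    exact ⟨⟨hPr, hB⟩, ⟨hPr, hB'⟩⟩

theorem dia_of_box {S : LogicSpec} {Sg : Set Formula} (hP : IsPrime S Sg) (hD : S.hasD = true)
    {B : Formula} (hb : Formula.box B ∈ Sg) : Formula.dia B ∈ Sg :=
  hP.imp_mem (WProof.dAx B hD) hb

theorem canonC_segment {S : LogicSpec} {Sg : Set Formula} (hP : IsPrime S Sg) :
    IsSegment S Sg (canonC S Sg) := by
  constructor
  · exact hP
  · rintro U ⟨B, hB, rfl⟩ Pr hPr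
    exact hPr.1
  · intro A hA
    exact ⟨UB S A, ⟨A, hA, rfl⟩, fun Pr hPr => hPr.2⟩
  · rintro A hA U ⟨B, hB, rfl⟩
    obtain ⟨Pr, hPr, hBPr, hAPr⟩ := dia_box_prime hP hB hA
    exact ⟨Pr, ⟨hPr, hBPr⟩, hAPr⟩
  · rintro hC U ⟨B, hB, rfl⟩ U' ⟨B', hB', rfl⟩
    rw [UB_inter]
    exact ⟨B.and B', hP.imp_mem (WProof.cBox B B' hC) (hP.and_mem.2 ⟨hB, hB'⟩), rfl⟩
  · rintro hD U ⟨B, hB, rfl⟩ U' ⟨B', hB', rfl⟩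
    obtain ⟨Pr, hPr, hBPr, hB'Pr⟩ := dia_box_prime hP hB (dia_of_box hP hD hB')
    exact ⟨Pr, ⟨hPr, hBPr⟩, ⟨hPr, hB'Pr⟩⟩
  · rintro hT U ⟨B, hB, rfl⟩
    exact ⟨hP, hP.imp_mem (WProof.tBox B hT) hB⟩

theorem canonC'_segment {S : LogicSpec} (hS : S.hasD = true → S.hasP = true ∨ S.hasN = true)
    {Sg : Set Formula} {A : Formula} (hP : IsPrime S Sg) (hA : Formula.dia A ∉ Sg) :
    IsSegment S Sg (canonC S Sg ∪ {Ustar S Sg A}) := by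
  have base := canonC_segment hP
  have hUB_of_star : ∀ hC : S.hasC = true, ∀ B : Formula, Formula.box B ∈ Sg →
      Ustar S Sg A ⊆ UB S B := by
    rintro hC B hB Pr ⟨hPr, _, hbox⟩
    exact ⟨hPr, hbox hC B hB⟩
  constructor
  · exact hP
  · rintro U (hU | hU) Pr hPr
    · exact base.allPrime U hU Pr hPr
    · rw [Set.mem_singleton_iff] at hU; subst hU; exact hPr.1
  · intro B hB
    obtain ⟨U, hU, hall⟩ := base.boxCond B hB
    exact ⟨U, Set.mem_union_left _ hU, hall⟩
  · rintro B hB U (hU | hU)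
    · exact base.diaCond B hB U hU
    · rw [Set.mem_singleton_iff] at hU; subst hU
      obtain ⟨Pr, hPr, hBPr⟩ := dia_avoid_prime hP hB hA
      exact ⟨Pr, hPr, hBPr⟩
  · rintro hC U (⟨B, hB, rfl⟩ | hU) U' (⟨B', hB', rfl⟩ | hU')
    · exact Set.mem_union_left _ (base.cCond hC _ ⟨B, hB, rfl⟩ _ ⟨B', hB', rfl⟩)
    · rw [Set.mem_singleton_iff] at hU'; subst hU'
      have : UB S B ∩ Ustar S Sg A = Ustar S Sg A :=
        Set.inter_eq_self_of_subset_right (hUB_of_star hC B hB)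
      rw [this]
      exact Set.mem_union_right _ rfl
    · rw [Set.mem_singleton_iff] at hU; subst hU
      have : Ustar S Sg A ∩ UB S B' = Ustar S Sg A :=
        Set.inter_eq_self_of_subset_left (hUB_of_star hC B' hB')
      rw [this]
      exact Set.mem_union_right _ rfl
    · rw [Set.mem_singleton_iff] at hU hU'; subst hU; subst hU'
      rw [Set.inter_self]
      exact Set.mem_union_right _ rfl
  · have hdt : S.hasD = true → Formula.dia Formula.top ∈ Sg := by
      intro hD
      rcases hS hD with hPp | hN
      · exact hP.mem_of_proof (WProof.pDia hPp)
      · exact dia_of_box hP hD (hP.mem_of_proof (WProof.nBox hN))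
    rintro hD U (⟨B, hB, rfl⟩ | hU) U' (⟨B', hB', rfl⟩ | hU')
    · exact base.dCond hD _ ⟨B, hB, rfl⟩ _ ⟨B', hB', rfl⟩
    · rw [Set.mem_singleton_iff] at hU'; subst hU'
      obtain ⟨Pr, hPr, hBPr⟩ := dia_avoid_prime hP (dia_of_box hP hD hB) hA
      exact ⟨Pr, ⟨hPr.1, hBPr⟩, hPr⟩
    · rw [Set.mem_singleton_iff] at hU; subst hU
      obtain ⟨Pr, hPr, hBPr⟩ := dia_avoid_prime hP (dia_of_box hP hD hB') hA
      exact ⟨Pr, hPr, ⟨hPr.1, hBPr⟩⟩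
    · rw [Set.mem_singleton_iff] at hU hU'; subst hU; subst hU'
      obtain ⟨Pr, hPr, _⟩ := dia_avoid_prime hP (hdt hD) hA
      exact ⟨Pr, hPr, hPr⟩
  · rintro hT U (hU | hU)
    · exact base.tCond hT U hU
    · rw [Set.mem_singleton_iff] at hU; subst hU
      refine ⟨hP, fun hA' => hA (hP.imp_mem (WProof.tDia A hT) hA'), ?_⟩
      intro _ C hc
      exact hP.imp_mem (WProof.tBox C hT) hc

/-! ### Truth lemma -/

theorem truth {S : LogicSpec} (hS : S.hasD = true → S.hasP = true ∨ S.hasN = true) :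
    ∀ (A : Formula) (x : Seg S), (canonical S).force A x ↔ A ∈ x.1.1 := by
  intro A
  induction A with
  | var p => intro x; exact Iff.rfl
  | bot =>
    intro x
    simp only [CNM.force]
    exact ⟨fun h => h.elim, fun h => x.2.prime.bot_not_mem h⟩
  | and A B ihA ihB =>
    intro x
    simp only [CNM.force]
    rw [ihA x, ihB x, x.2.prime.and_mem]
  | or A B ihA ihB =>
    intro x
    simp only [CNM.force]
    rw [ihA x, ihB x, x.2.prime.or_mem]
  | imp A B ihA ihB =>
    intro x
    simp only [CNM.force]
    constructor
    · intro hf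
      by_contra hnm
      have hnd : ¬ Deduces S (x.1.1 ∪ {A}) B := fun hd =>
        hnm (x.2.prime.closed _ (deduces_insert.1 hd))
      obtain ⟨Pr, hsub, hPr, hB⟩ := lindenbaum_s18 hnd
      have hAy : A ∈ Pr := hsub (Set.mem_union_right _ rfl)
      set y : Seg S := ⟨(Pr, canonC S Pr), canonC_segment hPr⟩ with hy
      have hle : (canonical S).le x y := fun C hC => hsub (Set.mem_union_left _ hC)
      exact hB ((ihB y).1 (hf y hle ((ihA y).2 hAy)))
    · intro hm v hle hAv
      exact (ihB v).2 (v.2.prime.mp_mem (hle hm) ((ihA v).1 hAv))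
  | box A ih =>
    intro x
    simp only [CNM.force]
    constructor
    · intro hf
      set y : Seg S := ⟨(x.1.1, canonC S x.1.1), canonC_segment x.2.prime⟩ with hy
      have hxy : (canonical S).le x y := subset_rfl
      obtain ⟨α, hα, hall⟩ := hf y hxy
      obtain ⟨U, hU, rfl⟩ := hα
      obtain ⟨B, hB, rfl⟩ := hU
      have hded : Deduces S {B} A := by
        by_contra hnd
        obtain ⟨Pr, hsub, hPr, hAPr⟩ := lindenbaum_s18 hnd
        have hmem : (⟨(Pr, canonC S Pr), canonC_segment hPr⟩ : Seg S) ∈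
            {z : Seg S | z.1.1 ∈ UB S B} := ⟨hPr, hsub rfl⟩
        exact hAPr ((ih _).1 (hall _ hmem))
      exact x.2.prime.imp_mem (WProof.monBox (deduces_singleton hded)) hB
    · intro hm v hle
      obtain ⟨U, hU, hall⟩ := v.2.boxCond A (hle hm)
      exact ⟨{y : Seg S | y.1.1 ∈ U}, ⟨U, hU, rfl⟩, fun u hu => (ih u).2 (hall _ hu)⟩
  | dia A ih =>
    intro x
    simp only [CNM.force]
    constructor
    · intro hf
      by_contra hnm
      set y : Seg S := ⟨(x.1.1, canonC S x.1.1 ∪ {Ustar S x.1.1 A}),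
        canonC'_segment hS x.2.prime hnm⟩ with hy
      have hle : (canonical S).le x y := subset_rfl
      have hα : {z : Seg S | z.1.1 ∈ Ustar S x.1.1 A} ∈ (canonical S).N y :=
        ⟨Ustar S x.1.1 A, Set.mem_union_right _ rfl, rfl⟩
      obtain ⟨u, hu, hfu⟩ := hf y hle _ hα
      exact hu.2.1 ((ih u).1 hfu)
    · intro hm v hle α hα
      obtain ⟨U, hU, rfl⟩ := hα
      obtain ⟨Pr, hPr, hAPr⟩ := v.2.diaCond A (hle hm) U hU
      have hPrime : IsPrime S Pr := v.2.allPrime U hU Pr hPr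
      exact ⟨⟨(Pr, canonC S Pr), canonC_segment hPrime⟩, hPr, (ih _).2 hAPr⟩

/-- truth lemma: in the canonical model for a W-logic WL, a segment
`(Σ,C)` forces `A` iff `A ∈ Σ`. -/
theorem statement18 (L : LName) (x : Seg (wSpec L)) (A : Formula) :
    (canonical (wSpec L)).force A x ↔ A ∈ x.1.1 := by
  exact truth (by cases L <;> simp [wSpec, cSpec]) A x
end
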